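/- Let $(\omega,x) \in \Omega \times M$ and $(\bar\omega,y) \in \mathbf{R}^c(\omega,x)$. Then there exists a control $v \in \mathcal{U}$ such that $(\bar\omega \cdot \tau, \varphi(\tau,\bar\omega,y,v)) \in \mathbf{R}^c(\omega,x)$ for all $\tau < 0$. -/
import Mathlib


open Metric Set

/-- A controlled `(ε,T)`-chain from `p` to `q`: exact motion in the base `Ω`,
`ε`-jumps in the state space `M`, jump times at least `T`. -/
def ControlledChain {Ω M U : Type*} [MetricSpace Ω] [MetricSpace M]
    (σ : ℝ → Ω → Ω) (φ : ℝ → Ω → M → U → M)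
    (ε T : ℝ) (p q : Ω × M) : Prop :=
  ∃ (n : ℕ) (ωc : Fin (n + 1) → Ω) (xc : Fin (n + 1) → M)
    (u : Fin n → U) (Tt : Fin n → ℝ),
    0 < n ∧ ωc 0 = p.1 ∧ xc 0 = p.2 ∧ xc (Fin.last n) = q.2 ∧
    (∀ j : Fin n, T ≤ Tt j) ∧
    (∀ j : Fin n, σ (Tt j) (ωc (Fin.castSucc j)) = ωc (Fin.succ j)) ∧
    dist (ωc (Fin.last n)) q.1 < ε ∧
    ∀ j : Fin n,
      dist (φ (Tt j) (ωc (Fin.castSucc j)) (xc (Fin.castSucc j)) (u j)) (xc (Fin.succ j)) < ε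

/-- The chain reachable set from `(ω, x)`. -/
def ChainReachable {Ω M U : Type*} [MetricSpace Ω] [MetricSpace M]
    (σ : ℝ → Ω → Ω) (φ : ℝ → Ω → M → U → M) (p : Ω × M) : Set (Ω × M) :=
  {q | ∀ ε T : ℝ, 0 < ε → 0 < T → ControlledChain σ φ ε T p q}

/-- Proposition 2.8(i), backward part: for `(ω̄,y) ∈ 𝐑ᶜ(ω,x)` there exists a control
`v ∈ 𝒰` with `(ω̄·τ, φ(τ,ω̄,y,v)) ∈ 𝐑ᶜ(ω,x)` for all `τ < 0`. -/
theorem chainReachable_backward_control {Ω M U : Type*} [MetricSpace Ω] [CompactSpace Ω]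
    [MetricSpace M] [MetricSpace U] [CompactSpace U]
    (σ : ℝ → Ω → Ω) (θ : ℝ → U → U) (φ : ℝ → Ω → M → U → M)
    (hσ0 : ∀ ω : Ω, σ 0 ω = ω)
    (hσadd : ∀ (t s : ℝ) (ω : Ω), σ (t + s) ω = σ s (σ t ω))
    (hσcont : Continuous fun p : ℝ × Ω => σ p.1 p.2)
    (hθ0 : ∀ u : U, θ 0 u = u)
    (hθadd : ∀ (t s : ℝ) (u : U), θ (t + s) u = θ s (θ t u))
    (hθcont : Continuous fun p : ℝ × U => θ p.1 p.2)
    (hφ0 : ∀ (ω : Ω) (x : M) (u : U), φ 0 ω x u = x)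
    (hφadd : ∀ (t s : ℝ) (ω : Ω) (x : M) (u : U),
      φ (t + s) ω x u = φ s (σ t ω) (φ t ω x u) (θ t u))
    (hφcont : Continuous fun p : ℝ × Ω × M × U => φ p.1 p.2.1 p.2.2.1 p.2.2.2)
    (p : Ω × M) (q : Ω × M) (hq : q ∈ ChainReachable σ φ p) :
    ∃ v : U, ∀ τ : ℝ, τ < 0 → (σ τ q.1, φ τ q.1 q.2 v) ∈ ChainReachable σ φ p := by

  classical
  -- For each `k`, get a `(1/(k+1), k+1)`-chain from `p` to `q`.
  have hch : ∀ k : ℕ, ControlledChain σ φ (1 / (k + 1)) (k + 1) p q := fun k =>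
    hq (1 / (k + 1)) (k + 1) (by positivity) (by positivity)
  simp only [ControlledChain] at hch
  choose n ωc xc u Tt hn hω0 hx0 hxl hT hσc hωd hjump using hch
  -- the last jump index
  have hnpos : ∀ k, 0 < n k := hn
  let jl : ∀ k, Fin (n k) := fun k => ⟨n k - 1, by have := hn k; omega⟩
  have hsucc : ∀ k, Fin.succ (jl k) = Fin.last (n k) := by
    intro k
    have := hn k
    apply Fin.ext
    simp only [Fin.val_succ, Fin.val_last, jl]
    omega
  have hcs : ∀ (k) (j : Fin (n k)), Fin.castSucc j ≠ Fin.last (n k) :=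
    fun k j => (Fin.castSucc_lt_last j).ne
  have h0l : ∀ k, (0 : Fin (n k + 1)) ≠ Fin.last (n k) := by
    intro k h
    have := congrArg Fin.val h
    simp only [Fin.val_zero, Fin.val_last] at this
    have := hn k
    omega
  -- key sequences
  set a : ℕ → Ω := fun k => ωc k (Fin.last (n k)) with ha_def
  set z : ℕ → M := fun k =>
    φ (Tt k (jl k)) (ωc k (Fin.castSucc (jl k))) (xc k (Fin.castSucc (jl k))) (u k (jl k))
    with hz_def
  set w : ℕ → U := fun k => θ (Tt k (jl k)) (u k (jl k)) with hw_def
  have haq : ∀ k, dist (a k) q.1 < 1 / (k + 1) := fun k => hωd k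
  have hzq : ∀ k, dist (z k) q.2 < 1 / (k + 1) := by
    intro k
    have := hjump k (jl k)
    rwa [hsucc k, hxl k] at this
  have honek : Filter.Tendsto (fun k : ℕ => 1 / ((k : ℝ) + 1)) Filter.atTop (nhds 0) :=
    tendsto_one_div_add_atTop_nhds_zero_nat
  have hatend : Filter.Tendsto a Filter.atTop (nhds q.1) := by
    rw [tendsto_iff_dist_tendsto_zero]
    exact squeeze_zero (fun k => dist_nonneg) (fun k => (haq k).le) honek
  have hztend : Filter.Tendsto z Filter.atTop (nhds q.2) := by
    rw [tendsto_iff_dist_tendsto_zero]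
    exact squeeze_zero (fun k => dist_nonneg) (fun k => (hzq k).le) honek
  -- subsequence with converging controls
  obtain ⟨v, -, ψ, hψmono, hψtend⟩ :=
    IsCompact.tendsto_subseq (isCompact_univ (X := U)) (fun k => mem_univ (w k))
  refine ⟨v, ?_⟩
  intro τ hτ
  intro ε T hε hT'
  -- continuity facts for fixed τ
  have hσcompletecont : Continuous fun ω : Ω => σ τ ω :=
    hσcont.comp (continuous_const.prodMk continuous_id)
  have hφτcont : Continuous fun r : Ω × M × U => φ τ r.1 r.2.1 r.2.2 :=
    hφcont.comp (continuous_const.prodMk continuous_id)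
  have hψatTop : Filter.Tendsto ψ Filter.atTop Filter.atTop := hψmono.tendsto_atTop
  -- eventually conditions along the subsequence
  have E1 : ∀ᶠ j in Filter.atTop, dist (σ τ (a (ψ j))) (σ τ q.1) < ε := by
    have : Filter.Tendsto (fun j => σ τ (a (ψ j))) Filter.atTop (nhds (σ τ q.1)) :=
      (hσcompletecont.tendsto q.1).comp (hatend.comp hψatTop)
    exact Metric.tendsto_nhds.mp this ε hε
  have E2 : ∀ᶠ j in Filter.atTop,
      dist (φ τ (a (ψ j)) (z (ψ j)) (w (ψ j))) (φ τ q.1 q.2 v) < ε := by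
    have htrip : Filter.Tendsto (fun j => ((a (ψ j)), (z (ψ j)), (w (ψ j))))
        Filter.atTop (nhds (q.1, q.2, v)) := by
      exact (hatend.comp hψatTop).prodMk_nhds ((hztend.comp hψatTop).prodMk_nhds hψtend)
    have : Filter.Tendsto (fun j => φ τ (a (ψ j)) (z (ψ j)) (w (ψ j)))
        Filter.atTop (nhds (φ τ q.1 q.2 v)) :=
      (hφτcont.tendsto (q.1, q.2, v)).comp htrip
    exact Metric.tendsto_nhds.mp this ε hε
  have E3 : ∀ᶠ j in Filter.atTop, 1 / ((ψ j : ℝ) + 1) < ε := by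
    have : Filter.Tendsto (fun j => 1 / ((ψ j : ℝ) + 1)) Filter.atTop (nhds 0) :=
      honek.comp hψatTop
    exact this.eventually_lt_const hε
  have E4 : ∀ᶠ j in Filter.atTop, T - τ ≤ (ψ j : ℝ) + 1 := by
    have : Filter.Tendsto (fun j => ((ψ j : ℝ) + 1)) Filter.atTop Filter.atTop :=
      Filter.tendsto_atTop_add_const_right _ 1 (tendsto_natCast_atTop_atTop.comp hψatTop)
    exact this.eventually_ge_atTop _
  obtain ⟨j0, ⟨⟨h1, h2⟩, h3⟩, h4⟩ := (((E1.and E2).and E3).and E4).exists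
  set k := ψ j0 with hk
  -- build the modified chain
  have hTk : ∀ i : Fin (n k), ((k : ℝ) + 1) ≤ Tt k i := hT k
  have hsucc_ne : ∀ i : Fin (n k), i ≠ jl k → Fin.succ i ≠ Fin.last (n k) := by
    intro i hi h
    exact hi (Fin.succ_injective _ (h.trans (hsucc k).symm))
  refine ⟨n k,
    Function.update (ωc k) (Fin.last (n k)) (σ τ (a k)),
    Function.update (xc k) (Fin.last (n k)) (φ τ q.1 q.2 v),
    u k,
    Function.update (Tt k) (jl k) (Tt k (jl k) + τ),
    hn k, ?_, ?_, ?_, ?_, ?_, ?_, ?_⟩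
  · rw [Function.update_of_ne (h0l k)]; exact hω0 k
  · rw [Function.update_of_ne (h0l k)]; exact hx0 k
  · rw [Function.update_self]
  · intro i
    by_cases hi : i = jl k
    · rw [hi, Function.update_self]
      have := hTk (jl k)
      linarith
    · rw [Function.update_of_ne hi]
      have := hTk i
      linarith
  · intro i
    by_cases hi : i = jl k
    · rw [hi, Function.update_self, Function.update_of_ne (hcs k (jl k)), hsucc k,
        Function.update_self, hσadd, hσc k (jl k), hsucc k]
    · rw [Function.update_of_ne hi, Function.update_of_ne (hcs k i),
        Function.update_of_ne (hsucc_ne i hi)]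
      exact hσc k i
  · rw [Function.update_self]
    exact h1
  · intro i
    by_cases hi : i = jl k
    · rw [hi, Function.update_self, Function.update_of_ne (hcs k (jl k)),
        Function.update_of_ne (hcs k (jl k)), hsucc k, Function.update_self, hφadd,
        hσc k (jl k), hsucc k]
      exact h2
    · rw [Function.update_of_ne hi, Function.update_of_ne (hcs k i),
        Function.update_of_ne (hcs k i), Function.update_of_ne (hsucc_ne i hi)]
      exact lt_trans (hjump k i) h3
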